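/- arXiv:2510.19744 — 6 statements merged into one kernel-verified Lean document; each statement's English description precedes it below -/
import Mathlib

section
/- Let A be a Boolean algebra, (μ_n) an anti-Nikodym sequence of measures on A (i.e. μ_n(B) → 0 for every B ∈ A and sup_n ‖μ_n‖ = ∞), and t an ultrafilter on A that is a Nikodym concentration point of (μ_n) (i.e. sup_n ‖μ_n ↾ A‖ = ∞ for every A ∈ t). Then for every α > 0 and every A ∈ t there exist n ∈ ω and B ≤ A with B ∉ t such that |μ_n(B)| > α. -/
open Filter
open scoped ENNReal

variable {α : Type*}

/-- Finite additivity of a real-valued set function on a Boolean algebra. -/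
def FinAdd [BooleanAlgebra α] (μ : α → ℝ) : Prop :=
  ∀ a b : α, a ⊓ b = ⊥ → μ (a ⊔ b) = μ a + μ b

/-- The variation of `μ` over the subfamily `s`:
`sup {|μ a| + |μ b| : a, b ∈ s, a ⊓ b = ⊥}`, computed in `ℝ≥0∞`. -/
noncomputable def svar [BooleanAlgebra α] (μ : α → ℝ) (s : Set α) : ℝ≥0∞ :=
  ⨆ p : {p : α × α // p.1 ∈ s ∧ p.2 ∈ s ∧ p.1 ⊓ p.2 = ⊥},
    ENNReal.ofReal (|μ p.1.1| + |μ p.1.2|)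

/-- The variation norm of the restriction `μ ↾ a`, i.e. `|μ|(a)`. -/
noncomputable def bvar [BooleanAlgebra α] (μ : α → ℝ) (a : α) : ℝ≥0∞ :=
  svar μ (Set.Iic a)

/-- `t` is an ultrafilter on the Boolean algebra `α`. -/
structure IsUltrafilterSet [BooleanAlgebra α] (t : Set α) : Prop where
  top_mem : ⊤ ∈ t
  bot_not_mem : ⊥ ∉ t
  mem_of_le : ∀ ⦃a b : α⦄, a ∈ t → a ≤ b → b ∈ t
  inf_mem : ∀ ⦃a b : α⦄, a ∈ t → b ∈ t → a ⊓ b ∈ t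

lemma svar_mono' [BooleanAlgebra α] (μ : α → ℝ) {s u : Set α} (h : s ⊆ u) :
    svar μ s ≤ svar μ u := by
  apply iSup_le
  rintro ⟨⟨a, b⟩, ha, hb, hab⟩
  exact le_iSup_of_le ⟨⟨a, b⟩, h ha, h hb, hab⟩ le_rfl

/-- If `(μ_n)` is an anti-Nikodym sequence on `α` and `t` is a Nikodym concentration point
of `(μ_n)`, then for every `r > 0` and `A ∈ t` there are `n` and `B ≤ A` with `B ∉ t` and
`|μ_n(B)| > r`. -/
theorem stmt_1 [BooleanAlgebra α] (μ : ℕ → α → ℝ)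
    (hadd : ∀ n, FinAdd (μ n)) (hbdd : ∀ n, bvar (μ n) ⊤ ≠ ⊤)
    (hpt : ∀ a : α, Tendsto (fun n => μ n a) atTop (nhds 0))
    (hub : (⨆ n, bvar (μ n) ⊤) = ⊤)
    (t : Set α) (ht : IsUltrafilterSet t)
    (hconc : ∀ A ∈ t, (⨆ n, bvar (μ n) A) = ⊤) :
    ∀ r : ℝ, 0 < r → ∀ A ∈ t, ∃ (n : ℕ) (B : α), B ≤ A ∧ B ∉ t ∧ r < |μ n B| := by
  intro r hr A hA
  obtain ⟨N, hNr⟩ : ∃ N, ∀ n ≥ N, |μ n A| < r := by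
    obtain ⟨N, hN⟩ := Metric.tendsto_atTop.mp (hpt A) r hr
    exact ⟨N, fun n hn => by simpa [Real.dist_eq] using hN n hn⟩
  obtain ⟨n, hnN, hn⟩ : ∃ n, N ≤ n ∧ ENNReal.ofReal (4 * r) < bvar (μ n) A := by
    by_contra h
    push_neg at h
    have hle : (⨆ n, bvar (μ n) A) ≤
        (Finset.range N).sup (fun k => bvar (μ k) A) ⊔ ENNReal.ofReal (4 * r) := by
      apply iSup_le; intro m
      rcases lt_or_ge m N with h1 | h1
      · exact le_sup_of_le_left (Finset.le_sup (f := fun k => bvar (μ k) A) (Finset.mem_range.2 h1))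
      · exact le_sup_of_le_right (h m h1)
    rw [hconc A hA] at hle
    have hfin : (Finset.range N).sup (fun k => bvar (μ k) A) ⊔ ENNReal.ofReal (4 * r) ≠ ⊤ := by
      apply ne_of_lt
      apply max_lt _ ENNReal.ofReal_lt_top
      refine (Finset.sup_lt_iff (by simp)).2 fun k _ => ?_
      exact lt_of_le_of_lt (svar_mono' (μ k) (Set.Iic_subset_Iic.2 le_top)) (hbdd k).lt_top
    exact hfin (top_le_iff.mp hle)
  rw [bvar, svar, lt_iSup_iff] at hn
  obtain ⟨⟨⟨a, b⟩, ha, hb, hab⟩, hlt⟩ := hn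
  simp only at hlt
  have hsum : 4 * r < |μ n a| + |μ n b| := by
    rwa [ENNReal.ofReal_lt_ofReal_iff_of_nonneg (by positivity)] at hlt
  have ha' : a ≤ A := ha
  have hb' : b ≤ A := hb
  have key : ∀ c : α, c ≤ A → c ∈ t → 2 * r < |μ n c| →
      ∃ B, B ≤ A ∧ B ∉ t ∧ r < |μ n B| := by
    intro c hcA hct hc
    have hd : c ⊓ (A ⊓ cᶜ) = ⊥ := by
      rw [inf_comm A cᶜ, ← inf_assoc]
      simp
    refine ⟨A ⊓ cᶜ, inf_le_left, ?_, ?_⟩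
    · intro hB
      have hmem := ht.inf_mem hct hB
      rw [hd] at hmem
      exact ht.bot_not_mem hmem
    · have hu : c ⊔ (A ⊓ cᶜ) = A := by
        rw [sup_inf_left]
        simp [sup_eq_right.2 hcA]
      have hsplit : μ n A = μ n c + μ n (A ⊓ cᶜ) := by
        have h0 := hadd n c (A ⊓ cᶜ) hd
        rw [hu] at h0; exact h0
      have hAr : |μ n A| < r := hNr n hnN
      have habs : |μ n c| - |μ n A| ≤ |μ n (A ⊓ cᶜ)| := by
        have h1 : μ n (A ⊓ cᶜ) = μ n A - μ n c := by linarith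
        rw [h1, abs_sub_comm]
        exact abs_sub_abs_le_abs_sub _ _
      linarith
  by_cases hat : a ∈ t
  · by_cases hbt : b ∈ t
    · exact absurd (hab ▸ ht.inf_mem hat hbt) ht.bot_not_mem
    · rcases lt_or_ge r |μ n b| with h1 | h1
      · exact ⟨n, b, hb', hbt, h1⟩
      · obtain ⟨B, h2, h3, h4⟩ := key a ha' hat (by linarith)
        exact ⟨n, B, h2, h3, h4⟩
  · by_cases hbt : b ∈ t
    · rcases lt_or_ge r |μ n a| with h1 | h1
      · exact ⟨n, a, ha', hat, h1⟩
      · obtain ⟨B, h2, h3, h4⟩ := key b hb' hbt (by linarith)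
        exact ⟨n, B, h2, h3, h4⟩
    · rcases le_or_gt (|μ n a|) (|μ n b|) with h1 | h1
      · exact ⟨n, b, hb', hbt, by linarith⟩
      · exact ⟨n, a, ha', hat, by linarith⟩
end

section
/- Let A be a Boolean algebra and (μ_n) an anti-Nikodym sequence of measures on A. Then there exist an antichain (A_k) in A and a strictly increasing sequence (n_k) of natural numbers such that |μ_{n_k}(A_k)| > k for every k. -/
open Filter
open scoped ENNReal

variable {α : Type*}

section MyAux
variable [BooleanAlgebra α]

lemma myFinAdd_bot {μ : α → ℝ} (h : FinAdd μ) : μ ⊥ = 0 := by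
  have := h ⊥ ⊥ (by simp)
  simp at this
  linarith

lemma my_pair_le_svar (μ : α → ℝ) {s : Set α} {b c : α} (hb : b ∈ s) (hc : c ∈ s)
    (hbc : b ⊓ c = ⊥) : ENNReal.ofReal (|μ b| + |μ c|) ≤ svar μ s :=
  le_iSup (fun p : {p : α × α // p.1 ∈ s ∧ p.2 ∈ s ∧ p.1 ⊓ p.2 = ⊥} =>
    ENNReal.ofReal (|μ p.1.1| + |μ p.1.2|)) ⟨(b, c), hb, hc, hbc⟩

lemma my_abs_le_bvar {μ : α → ℝ} (hμ : FinAdd μ) {b a : α} (hba : b ≤ a) :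
    ENNReal.ofReal |μ b| ≤ bvar μ a := by
  have h := my_pair_le_svar μ (s := Set.Iic a) hba (Set.mem_Iic.mpr bot_le) (inf_bot_eq b)
  simpa [myFinAdd_bot hμ, bvar] using h

lemma my_bvar_mono (μ : α → ℝ) {a a' : α} (h : a ≤ a') : bvar μ a ≤ bvar μ a' := by
  refine iSup_le ?_
  rintro ⟨⟨d, e⟩, hd, he, hde⟩
  exact my_pair_le_svar μ (Set.mem_Iic.mpr (le_trans hd h)) (Set.mem_Iic.mpr (le_trans he h)) hde

lemma my_split {μ : α → ℝ} (hμ : FinAdd μ) {b c d : α} (hbc : b ⊓ c = ⊥)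
    (hd : d ≤ b ⊔ c) : μ d = μ (d ⊓ b) + μ (d ⊓ c) := by
  have h1 : (d ⊓ b) ⊓ (d ⊓ c) = ⊥ := by
    have : (d ⊓ b) ⊓ (d ⊓ c) ≤ b ⊓ c := inf_le_inf inf_le_right inf_le_right
    exact le_bot_iff.mp (hbc ▸ this)
  have h2 : (d ⊓ b) ⊔ (d ⊓ c) = d := by
    rw [← inf_sup_left, inf_eq_left.mpr hd]
  conv_lhs => rw [← h2]
  exact hμ _ _ h1

lemma my_bvar_sup_le {μ : α → ℝ} (hμ : FinAdd μ) {b c : α} (hbc : b ⊓ c = ⊥) :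
    bvar μ (b ⊔ c) ≤ bvar μ b + bvar μ c := by
  refine iSup_le ?_
  rintro ⟨⟨d, e⟩, hd, he, hde⟩
  simp only [Set.mem_Iic] at hd he
  have hdsp := my_split hμ hbc hd
  have hesp := my_split hμ hbc he
  have h1 : |μ d| + |μ e| ≤ (|μ (d ⊓ b)| + |μ (e ⊓ b)|) + (|μ (d ⊓ c)| + |μ (e ⊓ c)|) := by
    have := abs_add_le (μ (d ⊓ b)) (μ (d ⊓ c))
    have := abs_add_le (μ (e ⊓ b)) (μ (e ⊓ c))
    rw [hdsp, hesp]; linarith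
  calc ENNReal.ofReal (|μ d| + |μ e|)
      ≤ ENNReal.ofReal ((|μ (d ⊓ b)| + |μ (e ⊓ b)|) + (|μ (d ⊓ c)| + |μ (e ⊓ c)|)) :=
        ENNReal.ofReal_le_ofReal h1
    _ ≤ ENNReal.ofReal (|μ (d ⊓ b)| + |μ (e ⊓ b)|) + ENNReal.ofReal (|μ (d ⊓ c)| + |μ (e ⊓ c)|) :=
        ENNReal.ofReal_add_le
    _ ≤ bvar μ b + bvar μ c := by
        have hb1 : (d ⊓ b) ⊓ (e ⊓ b) = ⊥ := by
          have : (d ⊓ b) ⊓ (e ⊓ b) ≤ d ⊓ e := inf_le_inf inf_le_left inf_le_left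
          exact le_bot_iff.mp (hde ▸ this)
        have hc1 : (d ⊓ c) ⊓ (e ⊓ c) = ⊥ := by
          have : (d ⊓ c) ⊓ (e ⊓ c) ≤ d ⊓ e := inf_le_inf inf_le_left inf_le_left
          exact le_bot_iff.mp (hde ▸ this)
        exact add_le_add
          (my_pair_le_svar μ (Set.mem_Iic.mpr inf_le_right) (Set.mem_Iic.mpr inf_le_right) hb1)
          (my_pair_le_svar μ (Set.mem_Iic.mpr inf_le_right) (Set.mem_Iic.mpr inf_le_right) hc1)

lemma my_exists_of_lt_bvar (μ : α → ℝ) {a : α} {r : ℝ}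
    (h : ENNReal.ofReal (2 * r) < bvar μ a) : ∃ b ≤ a, r < |μ b| := by
  rw [bvar, svar, lt_iSup_iff] at h
  obtain ⟨⟨⟨d, e⟩, hd, he, hde⟩, hp⟩ := h
  have h2 : 2 * r < |μ d| + |μ e| := by
    by_contra hcon
    push_neg at hcon
    exact absurd (ENNReal.ofReal_le_ofReal hcon) (not_le.mpr hp)
  rcases le_or_gt (|μ d|) r with h1 | h1
  · exact ⟨e, Set.mem_Iic.mp he, by linarith⟩
  · exact ⟨d, Set.mem_Iic.mp hd, h1⟩

lemma my_exists_tail (μ : ℕ → α → ℝ) (hbdd : ∀ n, bvar (μ n) ⊤ ≠ ⊤) {a : α}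
    (hva : (⨆ n, bvar (μ n) a) = ⊤) (C : ℝ≥0∞) (hC : C ≠ ⊤) (N : ℕ) :
    ∃ n, N < n ∧ C < bvar (μ n) a := by
  by_contra h
  push_neg at h
  set D : ℝ≥0∞ := C ⊔ (Finset.range (N + 1)).sup (fun m => bvar (μ m) a) with hD
  have hDlt : D < ⊤ := by
    rw [hD, sup_lt_iff]
    constructor
    · exact lt_top_iff_ne_top.mpr hC
    · rw [Finset.sup_lt_iff (by exact lt_top_iff_ne_top.mpr (by simp))]
      intro m _
      exact lt_of_le_of_lt (my_bvar_mono (μ m) le_top) (lt_top_iff_ne_top.mpr (hbdd m))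
  have : ∀ n, bvar (μ n) a ≤ D := by
    intro n
    rcases le_or_gt n N with hn | hn
    · exact le_sup_of_le_right (Finset.le_sup (f := fun m => bvar (μ m) a) (Finset.mem_range.mpr (Nat.lt_succ_of_le hn)))
    · exact le_sup_of_le_left (h n hn)
  exact absurd (hva ▸ iSup_le this) (not_le.mpr hDlt)

lemma my_key (μ : ℕ → α → ℝ) (hadd : ∀ n, FinAdd (μ n))
    (hbdd : ∀ n, bvar (μ n) ⊤ ≠ ⊤)
    (hpt : ∀ a : α, Tendsto (fun n => μ n a) atTop (nhds 0))
    {a : α} (hva : (⨆ n, bvar (μ n) a) = ⊤) (k : ℝ) (N : ℕ) :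
    ∃ p : ℕ × α, N < p.1 ∧ p.2 ≤ a ∧ k < |μ p.1 p.2| ∧
      (⨆ m, bvar (μ m) (a \ p.2)) = ⊤ := by
  classical
  set K : ℝ := max k 0 with hK
  -- eventually |μ n a| < 1
  have h1 : ∀ᶠ n in atTop, |μ n a| < 1 := by
    have := (hpt a).eventually (eventually_abs_sub_lt 0 one_pos)
    simpa using this
  obtain ⟨N', hN'⟩ := eventually_atTop.mp h1
  obtain ⟨n, hn, hbig⟩ := my_exists_tail μ hbdd hva (ENNReal.ofReal (2 * (K + 1)))
    ENNReal.ofReal_ne_top (max N N')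
  obtain ⟨b₀, hb₀a, hb₀⟩ := my_exists_of_lt_bvar (μ n) hbig
  have hNn : N < n := lt_of_le_of_lt (le_max_left _ _) hn
  have hμa : |μ n a| < 1 := hN' n (le_of_lt (lt_of_le_of_lt (le_max_right _ _) hn))
  have hkK : k ≤ K := le_max_left _ _
  have hdisj : b₀ ⊓ (a \ b₀) = ⊥ := disjoint_iff.mp disjoint_sdiff_self_right
  have hsup : b₀ ⊔ (a \ b₀) = a := sup_sdiff_cancel' le_rfl hb₀a
  by_cases htop : (⨆ m, bvar (μ m) (a \ b₀)) = ⊤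
  · exact ⟨(n, b₀), hNn, hb₀a, by linarith, htop⟩
  · -- then ⨆ m, bvar (μ m) b₀ = ⊤
    have hsub : (⨆ m, bvar (μ m) a) ≤ (⨆ m, bvar (μ m) b₀) + (⨆ m, bvar (μ m) (a \ b₀)) := by
      refine iSup_le fun m => ?_
      calc bvar (μ m) a = bvar (μ m) (b₀ ⊔ (a \ b₀)) := by rw [hsup]
        _ ≤ bvar (μ m) b₀ + bvar (μ m) (a \ b₀) := my_bvar_sup_le (hadd m) hdisj
        _ ≤ _ := add_le_add (le_iSup (fun m => bvar (μ m) b₀) m)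
            (le_iSup (fun m => bvar (μ m) (a \ b₀)) m)
    have hb₀top : (⨆ m, bvar (μ m) b₀) = ⊤ := by
      by_contra hb
      exact (ENNReal.add_ne_top.mpr ⟨hb, htop⟩) (top_le_iff.mp (hva ▸ hsub))
    refine ⟨(n, a \ b₀), hNn, sdiff_le, ?_, ?_⟩
    · -- k < |μ n (a \ b₀)|
      have hμsplit : μ n a = μ n b₀ + μ n (a \ b₀) := by
        conv_lhs => rw [← hsup]
        exact hadd n _ _ hdisj
      have habs : |μ n b₀| - |μ n a| ≤ |μ n (a \ b₀)| := by
        have h2 : |μ n b₀| ≤ |μ n a| + |μ n (a \ b₀)| := by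
          rw [show μ n b₀ = μ n a - μ n (a \ b₀) by linarith]
          exact abs_sub _ _
        linarith
      linarith
    · have : a \ (a \ b₀) = b₀ := by
        rw [sdiff_sdiff_right_self, inf_eq_right.mpr hb₀a]
      rw [this]
      exact hb₀top

end MyAux

theorem stmt_2' [BooleanAlgebra α] (μ : ℕ → α → ℝ)
    (hadd : ∀ n, FinAdd (μ n)) (hbdd : ∀ n, bvar (μ n) ⊤ ≠ ⊤)
    (hpt : ∀ a : α, Tendsto (fun n => μ n a) atTop (nhds 0))
    (hub : (⨆ n, bvar (μ n) ⊤) = ⊤) :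
    ∃ (A : ℕ → α) (nk : ℕ → ℕ), StrictMono nk ∧
      (∀ k, A k ≠ ⊥) ∧ (∀ k j, k ≠ j → A k ⊓ A j = ⊥) ∧
      ∀ k : ℕ, (k : ℝ) < |μ (nk k) (A k)| := by
  classical
  let T := {q : ℕ × α // (⨆ m, bvar (μ m) q.2) = ⊤}
  let step : ℕ → T → T := fun k q =>
    ⟨((my_key μ hadd hbdd hpt q.2 (k : ℝ) q.1.1).choose.1,
      q.1.2 \ (my_key μ hadd hbdd hpt q.2 (k : ℝ) q.1.1).choose.2),
      (my_key μ hadd hbdd hpt q.2 (k : ℝ) q.1.1).choose_spec.2.2.2⟩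
  let s : ℕ → T := fun k => Nat.rec (⟨(0, ⊤), hub⟩ : T) step k
  have hsucc : ∀ k, s (k + 1) = step k (s k) := fun k => rfl
  let nk : ℕ → ℕ := fun k => (my_key μ hadd hbdd hpt (s k).2 (k : ℝ) (s k).1.1).choose.1
  let A : ℕ → α := fun k => (my_key μ hadd hbdd hpt (s k).2 (k : ℝ) (s k).1.1).choose.2
  have hspec : ∀ k, (s k).1.1 < nk k ∧ A k ≤ (s k).1.2 ∧ ((k : ℝ) < |μ (nk k) (A k)|) ∧
      (⨆ m, bvar (μ m) ((s k).1.2 \ A k)) = ⊤ :=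
    fun k => (my_key μ hadd hbdd hpt (s k).2 (k : ℝ) (s k).1.1).choose_spec
  have hfst : ∀ k, (s (k + 1)).1.1 = nk k := fun k => rfl
  have hsnd : ∀ k, (s (k + 1)).1.2 = (s k).1.2 \ A k := fun k => rfl
  have hmono : ∀ k j, k ≤ j → (s j).1.2 ≤ (s k).1.2 := by
    intro k j hkj
    induction j with
    | zero => simp_all
    | succ j ih =>
      rcases hkj.lt_or_eq with h | h
      · calc (s (j + 1)).1.2 = (s j).1.2 \ A j := hsnd j
          _ ≤ (s j).1.2 := sdiff_le
          _ ≤ (s k).1.2 := ih (Nat.lt_succ_iff.mp h)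
      · subst h; exact le_rfl
  have hdisj : ∀ k j, k < j → Disjoint (A k) (A j) := by
    intro k j hkj
    have h1 : A j ≤ (s k).1.2 \ A k := by
      calc A j ≤ (s j).1.2 := (hspec j).2.1
        _ ≤ (s (k + 1)).1.2 := hmono (k + 1) j hkj
        _ = (s k).1.2 \ A k := hsnd k
    exact (disjoint_sdiff_self_left.mono_left h1).symm
  refine ⟨A, nk, ?_, ?_, ?_, fun k => (hspec k).2.2.1⟩
  · refine strictMono_nat_of_lt_succ fun k => ?_
    have := (hspec (k + 1)).1
    rwa [hfst k] at this
  · intro k hbot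
    have hk := (hspec k).2.2.1
    rw [hbot, myFinAdd_bot (hadd (nk k))] at hk
    simp at hk
    exact absurd hk (not_lt.mpr (Nat.cast_nonneg k))
  · intro k j hkj
    rcases lt_or_gt_of_ne hkj with h | h
    · exact disjoint_iff.mp (hdisj k j h)
    · exact disjoint_iff.mp ((hdisj j k h).symm)

/-- For every anti-Nikodym sequence `(μ_n)` on a Boolean algebra there exist an antichain
`(A_k)` and a strictly increasing sequence `(n_k)` with `|μ_{n_k}(A_k)| > k` for all `k`. -/
theorem stmt_2 [BooleanAlgebra α] (μ : ℕ → α → ℝ)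
    (hadd : ∀ n, FinAdd (μ n)) (hbdd : ∀ n, bvar (μ n) ⊤ ≠ ⊤)
    (hpt : ∀ a : α, Tendsto (fun n => μ n a) atTop (nhds 0))
    (hub : (⨆ n, bvar (μ n) ⊤) = ⊤) :
    ∃ (A : ℕ → α) (nk : ℕ → ℕ), StrictMono nk ∧
      (∀ k, A k ≠ ⊥) ∧ (∀ k j, k ≠ j → A k ⊓ A j = ⊥) ∧
      ∀ k : ℕ, (k : ℝ) < |μ (nk k) (A k)| := stmt_2' μ hadd hbdd hpt hub
end

section
/- Let A be a Boolean algebra, μ ∈ ba(A), ε > 0, and t a point of the Stone space St(A). Then there exists A ∈ A with t in the clopen set [A] such that |μ̂|([A] \ {t}) < ε, where μ̂ is the Radon extension of μ and |μ̂| its total variation. -/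
open Filter
open scoped ENNReal

variable {α : Type*}

open MeasureTheory

/-- A representation of the Boolean algebra `α` by the clopen subsets of its Stone space `S`. -/
structure StoneRep (α S : Type*) [BooleanAlgebra α] [TopologicalSpace S] where
  e : α → Set S
  isClopen : ∀ a, IsClopen (e a)
  map_bot : e ⊥ = ∅
  map_top : e ⊤ = Set.univ
  map_sup : ∀ a b, e (a ⊔ b) = e a ∪ e b
  map_inf : ∀ a b, e (a ⊓ b) = e a ∩ e b
  map_compl : ∀ a, e aᶜ = (e a)ᶜ
  injective : Function.Injective e
  surj_clopen : ∀ U : Set S, IsClopen U → ∃ a, e a = U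
/-- For every measure `μ` on a Boolean algebra, every `ε > 0`, and every point `t` of the
Stone space, there is `A` with `t ∈ [A]` and `|μ̂|([A] \ {t}) < ε`. -/
theorem stmt_4 {α S : Type*} [BooleanAlgebra α] [TopologicalSpace S] [CompactSpace S]
    [T2Space S] [TotallyDisconnectedSpace S] [MeasurableSpace S] [BorelSpace S]
    (R : StoneRep α S) (μ : α → ℝ)
    (hadd : FinAdd μ) (hbdd : bvar μ ⊤ ≠ ⊤)
    (μhat : MeasureTheory.SignedMeasure S)
    (hext : ∀ a, μhat (R.e a) = μ a)
    (hreg : μhat.totalVariation.Regular)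
    (ε : ℝ) (hε : 0 < ε) (t : S) :
    ∃ a : α, t ∈ R.e a ∧ μhat.totalVariation (R.e a \ {t}) < ENNReal.ofReal ε := by
  set ν := μhat.totalVariation with hν
  haveI : IsFiniteMeasure ν := by
    rw [hν, SignedMeasure.totalVariation]
    infer_instance
  have hfin : ν {t} ≠ ⊤ := measure_ne_top ν {t}
  have hlt : ν {t} < ν {t} + ENNReal.ofReal ε := by
    apply ENNReal.lt_add_right hfin
    simp [ENNReal.ofReal_pos, hε]
  haveI : ν.OuterRegular := hreg.toOuterRegular
  obtain ⟨U, hUsub, hUopen, hUlt⟩ := Set.exists_isOpen_lt_of_lt {t} _ hlt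
  have htU : t ∈ U := hUsub rfl
  obtain ⟨V, hVclopen, htV, hVU⟩ := compact_exists_isClopen_in_isOpen hUopen htU
  obtain ⟨a, ha⟩ := R.surj_clopen V hVclopen
  refine ⟨a, ha ▸ htV, ?_⟩
  have hsub : R.e a ⊆ U := ha ▸ hVU
  calc ν (R.e a \ {t}) ≤ ν (U \ {t}) := measure_mono (Set.diff_subset_diff_left hsub)
    _ < ENNReal.ofReal ε := by
        apply measure_diff_lt_of_lt_add (measurableSet_singleton t).nullMeasurableSet
          hUsub hfin hUlt
end

section
/- Let A be a Boolean algebra, I an ideal in A, and α ∈ ℝ. For μ ∈ ba(I) define T_α(μ) on the subalgebra A⟨I⟩ = I ∪ I* by T_α(μ)(A) = μ(A) if A ∈ I, and T_α(μ)(A) = −μ(Aᶜ) + α if A ∈ I*. Then T_α(μ) is a bounded finitely additive measure on A⟨I⟩ extending μ, and max(‖μ‖, |α|) ≤ ‖T_α(μ)‖ ≤ 2‖μ‖ + |α|. -/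
open Filter
open scoped ENNReal

variable {α : Type*}

/-- Finite additivity on the subfamily `s`. -/
def FinAddOn [BooleanAlgebra α] (s : Set α) (μ : α → ℝ) : Prop :=
  ∀ a b : α, a ∈ s → b ∈ s → a ⊓ b = ⊥ → μ (a ⊔ b) = μ a + μ b

/-- The subalgebra `A⟨I⟩ = I ∪ I*` of `α` generated by the ideal `I`. -/
def genSet [BooleanAlgebra α] (I : Order.Ideal α) : Set α := {a : α | a ∈ I ∨ aᶜ ∈ I}

open Classical in
/-- The extension `T_c(μ)` of a measure `μ ∈ ba(I)` to `A⟨I⟩`: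
`T_c(μ)(a) = μ(a)` if `a ∈ I`, and `T_c(μ)(a) = -μ(aᶜ) + c` otherwise. -/
noncomputable def extMap [BooleanAlgebra α] (I : Order.Ideal α) (μ : α → ℝ) (c : ℝ) :
    α → ℝ :=
  fun a => if a ∈ I then μ a else -μ aᶜ + c
/-- `T_c(μ)` is a bounded finitely additive measure on `A⟨I⟩` extending `μ`, with
`max(‖μ‖, |c|) ≤ ‖T_c(μ)‖ ≤ 2‖μ‖ + |c|`. -/
theorem stmt_6 [BooleanAlgebra α] (I : Order.Ideal α) (hproper : (⊤ : α) ∉ I)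
    (μ : α → ℝ) (c : ℝ)
    (hadd : FinAddOn (I : Set α) μ) (hbdd : svar μ (I : Set α) ≠ ⊤) :
    FinAddOn (genSet I) (extMap I μ c) ∧
    (∀ a ∈ I, extMap I μ c a = μ a) ∧
    svar (extMap I μ c) (genSet I) ≠ ⊤ ∧
    max (svar μ (I : Set α)) (ENNReal.ofReal |c|) ≤ svar (extMap I μ c) (genSet I) ∧
    svar (extMap I μ c) (genSet I) ≤ 2 * svar μ (I : Set α) + ENNReal.ofReal |c| := by
  classical
  have hbot : (⊥ : α) ∈ I := I.bot_mem
  have hμ0 : μ ⊥ = 0 := by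
    have h := hadd ⊥ ⊥ hbot hbot (by simp)
    simp at h; linarith
  -- key additivity helper: a ∈ I, bᶜ ∈ I, a ⊓ b = ⊥ ⇒ μ bᶜ = μ a + μ (aᶜ ⊓ bᶜ)
  have key : ∀ a b : α, a ∈ I → bᶜ ∈ I → a ⊓ b = ⊥ → μ bᶜ = μ a + μ (aᶜ ⊓ bᶜ) := by
    intro a b hA hBc hab
    have hle : a ≤ bᶜ := le_compl_iff_disjoint_right.2 (disjoint_iff.2 hab)
    have hmem : aᶜ ⊓ bᶜ ∈ I := I.lower inf_le_right hBc
    have hdisj : a ⊓ (aᶜ ⊓ bᶜ) = ⊥ := by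
      rw [← inf_assoc]; simp
    have hsup : a ⊔ (aᶜ ⊓ bᶜ) = bᶜ := by
      rw [sup_inf_left, sup_compl_eq_top, top_inf_eq, sup_eq_right.2 hle]
    have := hadd a (aᶜ ⊓ bᶜ) hA hmem hdisj
    rw [hsup] at this; exact this
  have hext : ∀ a ∈ I, extMap I μ c a = μ a := fun a ha => if_pos ha
  have hextc : ∀ a : α, a ∉ I → extMap I μ c a = -μ aᶜ + c := fun a ha => if_neg ha
  have hFA : FinAddOn (genSet I) (extMap I μ c) := by
    intro a b ha hb hab
    by_cases hA : a ∈ I <;> by_cases hB : b ∈ I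
    · have hs : a ⊔ b ∈ I := I.sup_mem hA hB
      rw [hext _ hs, hext _ hA, hext _ hB, hadd a b hA hB hab]
    · have hBc : bᶜ ∈ I := hb.resolve_left hB
      have hs : a ⊔ b ∉ I := fun h => hB (I.lower le_sup_right h)
      rw [hextc _ hs, hext _ hA, hextc _ hB, compl_sup,
        key a b hA hBc hab]
      ring
    · have hAc : aᶜ ∈ I := ha.resolve_left hA
      have hs : a ⊔ b ∉ I := fun h => hA (I.lower le_sup_left h)
      rw [hextc _ hs, hextc _ hA, hext _ hB, compl_sup,
        key b a hB hAc (by rw [inf_comm]; exact hab)]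
      rw [inf_comm]; ring
    · have hAc : aᶜ ∈ I := ha.resolve_left hA
      have hle : b ≤ aᶜ := le_compl_iff_disjoint_right.2
        (disjoint_iff.2 (by rw [inf_comm]; exact hab))
      exact absurd (I.lower hle hAc) hB
  have habs : ∀ a ∈ I, ENNReal.ofReal |μ a| ≤ svar μ (I : Set α) := by
    intro a ha
    refine le_iSup_of_le ⟨(a, ⊥), ha, hbot, inf_bot_eq a⟩ ?_
    simp [hμ0]
  -- upper bound
  have hup : svar (extMap I μ c) (genSet I) ≤
      2 * svar μ (I : Set α) + ENNReal.ofReal |c| := by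
    have hS2 : ∀ x y : α, x ∈ I → y ∈ I →
        ENNReal.ofReal |μ x| + ENNReal.ofReal |μ y| + ENNReal.ofReal |c| ≤
        2 * svar μ (I : Set α) + ENNReal.ofReal |c| := by
      intro x y hx hy
      rw [two_mul]
      exact add_le_add (add_le_add (habs x hx) (habs y hy)) le_rfl
    refine iSup_le ?_
    rintro ⟨⟨a, b⟩, ha, hb, hab⟩
    simp only
    by_cases hA : a ∈ I <;> by_cases hB : b ∈ I
    · refine le_trans ?_ (hS2 a b hA hB)
      rw [hext _ hA, hext _ hB, ENNReal.ofReal_add (abs_nonneg _) (abs_nonneg _)]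
      exact le_add_right le_rfl
    · have hBc : bᶜ ∈ I := hb.resolve_left hB
      refine le_trans ?_ (hS2 a bᶜ hA hBc)
      rw [hext _ hA, hextc _ hB]
      calc ENNReal.ofReal (|μ a| + |-μ bᶜ + c|)
          ≤ ENNReal.ofReal (|μ a| + |μ bᶜ| + |c|) := by
            refine ENNReal.ofReal_le_ofReal ?_
            have h1 := abs_add_le (-μ bᶜ) c
            rw [abs_neg] at h1; linarith
        _ = ENNReal.ofReal |μ a| + ENNReal.ofReal |μ bᶜ| + ENNReal.ofReal |c| := by
            rw [ENNReal.ofReal_add (by positivity) (abs_nonneg _),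
              ENNReal.ofReal_add (abs_nonneg _) (abs_nonneg _)]
    · have hAc : aᶜ ∈ I := ha.resolve_left hA
      refine le_trans ?_ (hS2 aᶜ b hAc hB)
      rw [hext _ hB, hextc _ hA]
      calc ENNReal.ofReal (|-μ aᶜ + c| + |μ b|)
          ≤ ENNReal.ofReal (|μ aᶜ| + |μ b| + |c|) := by
            refine ENNReal.ofReal_le_ofReal ?_
            have h1 := abs_add_le (-μ aᶜ) c
            rw [abs_neg] at h1; linarith
        _ = ENNReal.ofReal |μ aᶜ| + ENNReal.ofReal |μ b| + ENNReal.ofReal |c| := by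
            rw [ENNReal.ofReal_add (by positivity) (abs_nonneg _),
              ENNReal.ofReal_add (abs_nonneg _) (abs_nonneg _)]
    · have hAc : aᶜ ∈ I := ha.resolve_left hA
      have hle : b ≤ aᶜ := le_compl_iff_disjoint_right.2
        (disjoint_iff.2 (by rw [inf_comm]; exact hab))
      exact absurd (I.lower hle hAc) hB
  have hlow : max (svar μ (I : Set α)) (ENNReal.ofReal |c|) ≤
      svar (extMap I μ c) (genSet I) := by
    refine max_le ?_ ?_
    · refine iSup_le ?_
      rintro ⟨⟨a, b⟩, ha, hb, hab⟩
      refine le_iSup_of_le ⟨(a, b), Or.inl ha, Or.inl hb, hab⟩ ?_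
      simp only [hext _ ha, hext _ hb]
      exact le_rfl
    · refine le_iSup_of_le ⟨(⊤, ⊥), Or.inr (by simp [hbot]),
        Or.inl hbot, inf_bot_eq ⊤⟩ ?_
      have h1 : extMap I μ c ⊤ = c := by
        rw [hextc _ hproper, compl_top, hμ0]; ring
      have h2 : extMap I μ c ⊥ = 0 := by rw [hext _ hbot, hμ0]
      simp [h1, h2]
  have hntop : svar (extMap I μ c) (genSet I) ≠ ⊤ := by
    refine ne_top_of_le_ne_top ?_ hup
    exact ENNReal.add_ne_top.2 ⟨ENNReal.mul_ne_top (by simp) hbdd, ENNReal.ofReal_ne_top⟩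
  exact ⟨hFA, hext, hntop, hlow, hup⟩
end

section
/- Let A be an infinite Boolean algebra and I an ideal in A. The map (μ, α) ↦ T_α(μ), where T_α(μ)(A) = μ(A) for A ∈ I and T_α(μ)(A) = −μ(Aᶜ) + α for A ∈ I*, is a bounded linear bijection (hence a Banach space isomorphism) from ba(I) ⊕ ℝ (with the sum norm) onto ba(A⟨I⟩), with operator norm at most 2. -/
open Filter
open scoped ENNReal

variable {α : Type*}

lemma svar_le_aux [BooleanAlgebra α] {μ : α → ℝ} {s : Set α} {C : ℝ≥0∞}
    (h : ∀ a b : α, a ∈ s → b ∈ s → a ⊓ b = ⊥ → ENNReal.ofReal (|μ a| + |μ b|) ≤ C) :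
    svar μ s ≤ C :=
  iSup_le fun ⟨⟨a, b⟩, ha, hb, hab⟩ => h a b ha hb hab

lemma le_svar_aux [BooleanAlgebra α] {μ : α → ℝ} {s : Set α} {a b : α}
    (ha : a ∈ s) (hb : b ∈ s) (hab : a ⊓ b = ⊥) :
    ENNReal.ofReal (|μ a| + |μ b|) ≤ svar μ s :=
  le_iSup (fun p : {p : α × α // p.1 ∈ s ∧ p.2 ∈ s ∧ p.1 ⊓ p.2 = ⊥} =>
    ENNReal.ofReal (|μ p.1.1| + |μ p.1.2|)) ⟨(a, b), ha, hb, hab⟩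

lemma finAddOn_bot [BooleanAlgebra α] {μ : α → ℝ} {s : Set α}
    (hμ : FinAddOn s μ) (hbot : ⊥ ∈ s) : μ ⊥ = 0 := by
  have := hμ ⊥ ⊥ hbot hbot (by simp)
  simp at this
  linarith

lemma abs_le_svar_aux [BooleanAlgebra α] {μ : α → ℝ} {s : Set α} {a : α}
    (hμ : FinAddOn s μ) (hbot : ⊥ ∈ s) (ha : a ∈ s) :
    ENNReal.ofReal |μ a| ≤ svar μ s := by
  have h := le_svar_aux (μ := μ) ha hbot (by simp)
  rwa [finAddOn_bot hμ hbot, abs_zero, add_zero] at h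

/-- The map `(μ, c) ↦ T_c(μ)` is a linear bijection from `ba(I) ⊕ ℝ` onto `ba(A⟨I⟩)`
with operator norm at most `2` (hence a Banach space isomorphism). -/
theorem stmt_7 [BooleanAlgebra α] [Infinite α] (I : Order.Ideal α)
    (hproper : (⊤ : α) ∉ I) :
    -- well-definedness: `T_c(μ)` lies in `ba(A⟨I⟩)`
    (∀ (μ : α → ℝ) (c : ℝ), FinAddOn (I : Set α) μ → svar μ (I : Set α) ≠ ⊤ →
        FinAddOn (genSet I) (extMap I μ c) ∧ svar (extMap I μ c) (genSet I) ≠ ⊤) ∧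
    -- additivity
    (∀ (μ μ' : α → ℝ) (c c' : ℝ) (a : α),
        extMap I (fun x => μ x + μ' x) (c + c') a = extMap I μ c a + extMap I μ' c' a) ∧
    -- homogeneity
    (∀ (μ : α → ℝ) (c r : ℝ) (a : α),
        extMap I (fun x => r * μ x) (r * c) a = r * extMap I μ c a) ∧
    -- injectivity
    (∀ (μ μ' : α → ℝ) (c c' : ℝ), FinAddOn (I : Set α) μ → FinAddOn (I : Set α) μ' →
        (∀ a ∈ genSet I, extMap I μ c a = extMap I μ' c' a) →
        c = c' ∧ ∀ a ∈ I, μ a = μ' a) ∧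
    -- surjectivity onto `ba(A⟨I⟩)`
    (∀ ν : α → ℝ, FinAddOn (genSet I) ν → svar ν (genSet I) ≠ ⊤ →
        ∃ (μ : α → ℝ) (c : ℝ), FinAddOn (I : Set α) μ ∧ svar μ (I : Set α) ≠ ⊤ ∧
          ∀ a ∈ genSet I, extMap I μ c a = ν a) ∧
    -- operator norm at most 2
    (∀ (μ : α → ℝ) (c : ℝ), FinAddOn (I : Set α) μ → svar μ (I : Set α) ≠ ⊤ →
        svar (extMap I μ c) (genSet I) ≤ 2 * (svar μ (I : Set α) + ENNReal.ofReal |c|)) := by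
  classical
  have hbotI : (⊥ : α) ∈ I := I.bot_mem
  have hbotg : (⊥ : α) ∈ genSet I := Or.inl hbotI
  have htopg : (⊤ : α) ∈ genSet I := Or.inr (by simpa using hbotI)
  have hnot : ∀ x : α, xᶜ ∈ I → x ∉ I := by
    intro x hxc hx
    exact hproper (by simpa [sup_compl_eq_top] using I.sup_mem hx hxc)
  have htopI : (⊤ : α) ∉ I := hproper
  -- finite additivity of the extension
  have key : ∀ (μ : α → ℝ) (c : ℝ), FinAddOn (I : Set α) μ →
      FinAddOn (genSet I) (extMap I μ c) := by
    intro μ c hμ a b ha hb hab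
    have hale : a ≤ bᶜ := le_compl_iff_disjoint_right.2 (disjoint_iff.2 hab)
    have hble : b ≤ aᶜ := le_compl_iff_disjoint_left.2 (disjoint_iff.2 hab)
    rcases ha with haI | haC
    · rcases hb with hbI | hbC
      · have hs : a ⊔ b ∈ I := I.sup_mem haI hbI
        simp only [extMap, if_pos haI, if_pos hbI, if_pos hs]
        exact hμ a b haI hbI hab
      · have hbnI : b ∉ I := hnot b hbC
        have hsnI : a ⊔ b ∉ I := fun hs => hbnI (I.lower le_sup_right hs)
        simp only [extMap, if_pos haI, if_neg hbnI, if_neg hsnI, compl_sup]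
        have hmem : aᶜ ⊓ bᶜ ∈ I := I.lower inf_le_right hbC
        have hdisj : a ⊓ (aᶜ ⊓ bᶜ) = ⊥ := by
          rw [← inf_assoc, inf_compl_eq_bot, bot_inf_eq]
        have hsup : a ⊔ (aᶜ ⊓ bᶜ) = bᶜ := by
          rw [sup_inf_left, sup_compl_eq_top, top_inf_eq, sup_eq_right.2 hale]
        have := hμ a (aᶜ ⊓ bᶜ) haI hmem hdisj
        rw [hsup] at this
        linarith
    · rcases hb with hbI | hbC
      swap
      · exfalso
        apply hproper
        have := I.sup_mem haC hbC
        rwa [← compl_inf, hab, compl_bot] at this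
      · have hanI : a ∉ I := hnot a haC
        have hsnI : a ⊔ b ∉ I := fun hs => hanI (I.lower le_sup_left hs)
        simp only [extMap, if_pos hbI, if_neg hanI, if_neg hsnI, compl_sup]
        have hmem : aᶜ ⊓ bᶜ ∈ I := I.lower inf_le_left haC
        have hdisj : b ⊓ (aᶜ ⊓ bᶜ) = ⊥ := by
          rw [inf_left_comm, inf_compl_eq_bot, inf_bot_eq]
        have hsup : b ⊔ (aᶜ ⊓ bᶜ) = aᶜ := by
          rw [sup_inf_left, inf_comm (b ⊔ aᶜ), sup_compl_eq_top, top_inf_eq,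
            sup_eq_right.2 hble]
        have := hμ b (aᶜ ⊓ bᶜ) hbI hmem hdisj
        rw [hsup] at this
        linarith
  -- the norm bound
  have bound : ∀ (μ : α → ℝ) (c : ℝ), FinAddOn (I : Set α) μ →
      svar (extMap I μ c) (genSet I) ≤ 2 * (svar μ (I : Set α) + ENNReal.ofReal |c|) := by
    intro μ c hμ
    set S := svar μ (I : Set α) with hS
    set K := ENNReal.ofReal |c| with hK
    have habs : ∀ a : α, a ∈ I → ENNReal.ofReal |μ a| ≤ S :=
      fun a ha => abs_le_svar_aux hμ hbotI ha
    have step : svar (extMap I μ c) (genSet I) ≤ S + (S + K) := by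
      apply svar_le_aux
      intro a b ha hb hab
      have mixed : ∀ x y : α, x ∈ I → yᶜ ∈ I → y ∉ I →
          ENNReal.ofReal (|extMap I μ c x| + |extMap I μ c y|) ≤ S + (S + K) := by
        intro x y hx hyc hyn
        simp only [extMap, if_pos hx, if_neg hyn]
        have hre : |μ x| + |-μ yᶜ + c| ≤ |μ x| + (|μ yᶜ| + |c|) := by
          have h1 := abs_add_le (-μ yᶜ) c
          rw [abs_neg] at h1
          linarith
        calc ENNReal.ofReal (|μ x| + |-μ yᶜ + c|)
            ≤ ENNReal.ofReal (|μ x| + (|μ yᶜ| + |c|)) := ENNReal.ofReal_le_ofReal hre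
          _ = ENNReal.ofReal |μ x| + (ENNReal.ofReal |μ yᶜ| + ENNReal.ofReal |c|) := by
              rw [ENNReal.ofReal_add (abs_nonneg _) (by positivity),
                ENNReal.ofReal_add (abs_nonneg _) (abs_nonneg _)]
          _ ≤ S + (S + K) :=
              add_le_add (habs x hx) (add_le_add (habs yᶜ hyc) le_rfl)
      rcases ha with haI | haC
      · rcases hb with hbI | hbC
        · simp only [extMap, if_pos haI, if_pos hbI]
          exact le_trans (le_svar_aux haI hbI hab) le_self_add
        · exact mixed a b haI hbC (hnot b hbC)
      · rcases hb with hbI | hbC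
        · have h := mixed b a hbI haC (hnot a haC)
          rwa [add_comm (|extMap I μ c b|)] at h
        · exfalso
          apply hproper
          have := I.sup_mem haC hbC
          rwa [← compl_inf, hab, compl_bot] at this
    calc svar (extMap I μ c) (genSet I) ≤ S + (S + K) := step
      _ ≤ (S + K) + (S + K) := add_le_add le_self_add le_rfl
      _ = 2 * (S + K) := (two_mul _).symm
  refine ⟨?_, ?_, ?_, ?_, ?_, fun μ c hμ _ => bound μ c hμ⟩
  · intro μ c hμ hfin
    refine ⟨key μ c hμ, ?_⟩
    have h := bound μ c hμ
    intro htop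
    rw [htop] at h
    have : (2 : ℝ≥0∞) * (svar μ (I : Set α) + ENNReal.ofReal |c|) ≠ ⊤ :=
      ENNReal.mul_ne_top (by norm_num)
        (ENNReal.add_ne_top.2 ⟨hfin, ENNReal.ofReal_ne_top⟩)
    exact this (top_le_iff.1 h)
  · intro μ μ' c c' a
    by_cases ha : a ∈ I <;> simp [extMap, ha] <;> ring
  · intro μ c r a
    by_cases ha : a ∈ I <;> simp [extMap, ha] <;> ring
  · intro μ μ' c c' hμ hμ' heq
    have hμb : μ ⊥ = 0 := finAddOn_bot hμ hbotI
    have hμ'b : μ' ⊥ = 0 := finAddOn_bot hμ' hbotI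
    constructor
    · have h := heq ⊤ htopg
      simp only [extMap, if_neg htopI, compl_top, hμb, hμ'b] at h
      linarith
    · intro a ha
      have h := heq a (Or.inl ha)
      simpa only [extMap, if_pos ha] using h
  · intro ν hν hfin
    refine ⟨ν, ν ⊤, fun a b ha hb hab => hν a b (Or.inl ha) (Or.inl hb) hab, ?_, ?_⟩
    · intro htop
      apply hfin
      rw [eq_top_iff, ← htop]
      apply svar_le_aux
      intro a b ha hb hab
      exact le_svar_aux (Or.inl ha) (Or.inl hb) hab
    · intro a ha
      by_cases haI : a ∈ I
      · simp [extMap, haI]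
      · have haC : aᶜ ∈ I := ha.resolve_left haI
        have h := hν a aᶜ ha (Or.inl haC) inf_compl_eq_bot
        rw [sup_compl_eq_top] at h
        simp only [extMap, if_neg haI]
        linarith
end

section
/- Let I be an ideal in a Boolean algebra A, and let μ ∈ ba(A⟨I⟩) and ν ∈ ba(I) be such that μ extends ν (μ ↾ I = ν). Then ‖μ‖ = ‖ν‖ + |μ̂({p})|, where μ̂ is the Radon extension of μ to the Stone space of A⟨I⟩ and p is the point of the Stone space corresponding to the ultrafilter I* of A⟨I⟩. -/
open Filter
open scoped ENNReal

variable {α : Type*}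

open MeasureTheory

private lemma abs_le_tv19 {S : Type*} [MeasurableSpace S] (s : SignedMeasure S) {E : Set S}
    (hE : MeasurableSet E) : |s E| ≤ (s.totalVariation E).toReal := by
  have h1 : s E = (s.toJordanDecomposition.posPart E).toReal
      - (s.toJordanDecomposition.negPart E).toReal := by
    conv_lhs => rw [← s.toSignedMeasure_toJordanDecomposition]
    rw [JordanDecomposition.toSignedMeasure, Measure.toSignedMeasure_sub_apply hE]; rfl
  rw [h1, SignedMeasure.totalVariation, Measure.add_apply,
    ENNReal.toReal_add (measure_ne_top _ _) (measure_ne_top _ _)]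
  exact (abs_sub _ _).trans (by
    rw [abs_of_nonneg ENNReal.toReal_nonneg, abs_of_nonneg ENNReal.toReal_nonneg])

private lemma same_sign19 (u v w : ℝ) : 0 ≤ u * w ∨ 0 ≤ v * w ∨ 0 ≤ u * v := by
  rcases le_or_gt 0 u with hu | hu <;> rcases le_or_gt 0 v with hv | hv <;>
    rcases le_or_gt 0 w with hw | hw <;>
    first
      | (left; positivity)
      | (left; nlinarith)
      | (right; left; nlinarith)
      | (right; right; nlinarith)

private lemma abs_add_of_mul_nonneg19 {u v : ℝ} (h : 0 ≤ u * v) : |u + v| = |u| + |v| := by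
  rcases le_or_gt 0 u with hu | hu <;> rcases le_or_gt 0 v with hv | hv
  · rw [abs_of_nonneg (by linarith), abs_of_nonneg hu, abs_of_nonneg hv]
  · have : u = 0 := by nlinarith
    subst this; simp
  · have : v = 0 := by nlinarith
    subst this; simp
  · rw [abs_of_nonpos (by linarith), abs_of_nonpos hu.le, abs_of_nonpos hv.le]; ring

/-- Decomposition of the norm of a measure `μ ∈ ba(A⟨I⟩)` extending `ν = μ ↾ I`:
`‖μ‖ = ‖ν‖ + |μ̂({p})|`, where `p` is the point of the Stone space of `A⟨I⟩`
corresponding to the ultrafilter `I*`.  Here the Boolean algebra `α` plays the role of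
`A⟨I⟩`, i.e. `I` is an ideal in `α` with `a ∈ I` or `aᶜ ∈ I` for every `a`. -/
theorem stmt_19 {α S : Type*} [BooleanAlgebra α] [TopologicalSpace S] [CompactSpace S]
    [T2Space S] [TotallyDisconnectedSpace S] [MeasurableSpace S] [BorelSpace S]
    (I : Order.Ideal α) (hgen : ∀ a : α, a ∈ I ∨ aᶜ ∈ I)
    (R : StoneRep α S)
    (μ : α → ℝ) (hadd : FinAdd μ) (hbdd : bvar μ ⊤ ≠ ⊤)
    (μhat : MeasureTheory.SignedMeasure S)
    (hext : ∀ a, μhat (R.e a) = μ a)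
    (hreg : μhat.totalVariation.Regular)
    (p : S) (hp : ∀ a : α, p ∈ R.e a ↔ aᶜ ∈ I) :
    bvar μ ⊤ = svar μ (I : Set α) + ENNReal.ofReal |μhat {p}| := by
  classical
  haveI : IsFiniteMeasure μhat.totalVariation := by
    unfold SignedMeasure.totalVariation; infer_instance
  haveI : μhat.totalVariation.OuterRegular := hreg.toOuterRegular
  have hmeas : ∀ a : α, MeasurableSet (R.e a) := fun a =>
    (R.isClopen a).isOpen.measurableSet
  have hpm : MeasurableSet ({p} : Set S) := measurableSet_singleton p
  have hμbot : μ ⊥ = 0 := by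
    have := hadd ⊥ ⊥ (by simp)
    simp only [sup_idem] at this; linarith
  have hemono : ∀ {a b : α}, a ≤ b → R.e a ⊆ R.e b := by
    intro a b hab
    have h := R.map_inf a b
    rw [inf_eq_left.mpr hab] at h
    rw [h]; exact Set.inter_subset_right
  set x := μhat {p} with hxdef
  -- the key approximation lemma
  have approx : ∀ ε : ℝ, 0 < ε → ∃ c : α, cᶜ ∈ I ∧ p ∈ R.e c ∧
      (μhat.totalVariation (R.e c \ {p})).toReal < ε := by
    intro ε hε
    obtain ⟨U, hpU, hUo, -, hUlt⟩ :=
      hpm.exists_isOpen_diff_lt (μ := μhat.totalVariation) (measure_ne_top _ _)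
        ((ENNReal.ofReal_pos.mpr hε).ne')
    obtain ⟨V, hVclopen, hpV, hVU⟩ := compact_exists_isClopen_in_isOpen hUo (hpU rfl)
    obtain ⟨c, rfl⟩ := R.surj_clopen V hVclopen
    refine ⟨c, (hp c).mp hpV, hpV, ?_⟩
    have hle : μhat.totalVariation (R.e c \ {p}) < ENNReal.ofReal ε :=
      lt_of_le_of_lt (measure_mono (Set.diff_subset_diff_left hVU)) hUlt
    have h2 := (ENNReal.toReal_lt_toReal (measure_ne_top _ _) ENNReal.ofReal_ne_top).mpr hle
    rwa [ENNReal.toReal_ofReal hε.le] at h2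
  -- |μhat E| bounds
  have hbound_mem : ∀ {E : Set S}, MeasurableSet E → p ∈ E →
      |μhat E| ≤ |x| + (μhat.totalVariation (E \ {p})).toReal := by
    intro E hE hpE
    have hsplit : μhat E = x + μhat (E \ {p}) := by
      rw [hxdef, ← VectorMeasure.of_union Set.disjoint_sdiff_right hpm (hE.diff hpm),
        Set.union_diff_cancel (Set.singleton_subset_iff.mpr hpE)]
    rw [hsplit]
    exact (abs_add_le _ _).trans (by gcongr; exact abs_le_tv19 μhat (hE.diff hpm))
  have hbound_notmem : ∀ {E : Set S}, MeasurableSet E → p ∉ E →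
      |μhat E| ≤ (μhat.totalVariation (E \ {p})).toReal := by
    intro E hE hpE
    rw [Set.diff_singleton_eq_self hpE]
    exact abs_le_tv19 μhat hE
  -- monotone total-variation bound
  have htvmono : ∀ {c d : α}, d ≤ c →
      (μhat.totalVariation (R.e d \ {p})).toReal
        ≤ (μhat.totalVariation (R.e c \ {p})).toReal :=
    fun {c d} hd => ENNReal.toReal_mono (measure_ne_top _ _)
      (measure_mono (Set.diff_subset_diff_left (hemono hd)))
  -- pair bounds and sup characterizations
  set B := (bvar μ ⊤).toReal with hBdef
  have hNle_bvar : svar μ (I : Set α) ≤ bvar μ ⊤ := by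
    refine iSup_le fun q => ?_
    exact le_iSup (fun q : {q : α × α // q.1 ∈ Set.Iic (⊤ : α) ∧ q.2 ∈ Set.Iic (⊤ : α) ∧
      q.1 ⊓ q.2 = ⊥} => ENNReal.ofReal (|μ q.1.1| + |μ q.1.2|))
      ⟨q.1, ⟨le_top, le_top, q.2.2.2⟩⟩
  have hNfin : svar μ (I : Set α) ≠ ⊤ :=
    (lt_of_le_of_lt hNle_bvar (lt_top_iff_ne_top.mpr hbdd)).ne
  set N := (svar μ (I : Set α)).toReal with hNdef
  have hpairB : ∀ a b : α, a ⊓ b = ⊥ → |μ a| + |μ b| ≤ B := by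
    intro a b hab
    have h1 : ENNReal.ofReal (|μ a| + |μ b|) ≤ bvar μ ⊤ :=
      le_iSup (fun q : {q : α × α // q.1 ∈ Set.Iic (⊤ : α) ∧ q.2 ∈ Set.Iic (⊤ : α) ∧
        q.1 ⊓ q.2 = ⊥} => ENNReal.ofReal (|μ q.1.1| + |μ q.1.2|)) ⟨(a, b), ⟨le_top, le_top, hab⟩⟩
    have h2 := ENNReal.toReal_mono hbdd h1
    rwa [ENNReal.toReal_ofReal (by positivity)] at h2
  have hBle : ∀ r : ℝ, (∀ a b : α, a ⊓ b = ⊥ → |μ a| + |μ b| ≤ r) → B ≤ r := by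
    intro r hr
    have hr0 : 0 ≤ r := by
      have := hr ⊥ ⊥ (by simp); rw [hμbot] at this; simpa using this
    have h1 : bvar μ ⊤ ≤ ENNReal.ofReal r :=
      iSup_le fun q => ENNReal.ofReal_le_ofReal (hr q.1.1 q.1.2 q.2.2.2)
    have h2 := ENNReal.toReal_mono ENNReal.ofReal_ne_top h1
    rwa [ENNReal.toReal_ofReal hr0] at h2
  have hNge : ∀ r : ℝ, (∀ a b : α, a ∈ I → b ∈ I → a ⊓ b = ⊥ → |μ a| + |μ b| ≤ r) → N ≤ r := by
    intro r hr
    have hr0 : 0 ≤ r := by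
      have := hr ⊥ ⊥ I.bot_mem I.bot_mem (by simp); rw [hμbot] at this; simpa using this
    have h1 : svar μ (I : Set α) ≤ ENNReal.ofReal r :=
      iSup_le fun q => ENNReal.ofReal_le_ofReal (hr q.1.1 q.1.2 q.2.1 q.2.2.1 q.2.2.2)
    have h2 := ENNReal.toReal_mono ENNReal.ofReal_ne_top h1
    rwa [ENNReal.toReal_ofReal hr0] at h2
  have hpairN : ∀ a b : α, a ∈ I → b ∈ I → a ⊓ b = ⊥ → |μ a| + |μ b| ≤ N := by
    intro a b ha hb hab
    have h1 : ENNReal.ofReal (|μ a| + |μ b|) ≤ svar μ (I : Set α) :=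
      le_iSup (fun q : {q : α × α // q.1 ∈ (I : Set α) ∧ q.2 ∈ (I : Set α) ∧
        q.1 ⊓ q.2 = ⊥} => ENNReal.ofReal (|μ q.1.1| + |μ q.1.2|)) ⟨(a, b), ⟨ha, hb, hab⟩⟩
    have h2 := ENNReal.toReal_mono hNfin h1
    rwa [ENNReal.toReal_ofReal (by positivity)] at h2
  -- Upper bound : B ≤ N + |x|
  have hupper : B ≤ N + |x| := by
    refine hBle _ fun a b hab => ?_
    refine le_of_forall_pos_le_add fun ε hε => ?_
    obtain ⟨c, hcI, hpc, ht⟩ := approx (ε / 2) (by linarith)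
    set t := (μhat.totalVariation (R.e c \ {p})).toReal with htdef
    have ht0 : 0 ≤ t := ENNReal.toReal_nonneg
    have hsplita : ∀ d : α, μ d = μ (d ⊓ cᶜ) + μ (d ⊓ c) := by
      intro d
      have hdisj : (d ⊓ cᶜ) ⊓ (d ⊓ c) = ⊥ :=
        le_bot_iff.mp (le_trans (inf_le_inf inf_le_right inf_le_right) (by simp))
      have hsup : (d ⊓ cᶜ) ⊔ (d ⊓ c) = d := by
        rw [← inf_sup_left]; simp
      have h := hadd _ _ hdisj
      rw [hsup] at h; linarith
    have hIa : a ⊓ cᶜ ∈ I := I.lower inf_le_right hcI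
    have hIb : b ⊓ cᶜ ∈ I := I.lower inf_le_right hcI
    have hdis1 : (a ⊓ cᶜ) ⊓ (b ⊓ cᶜ) = ⊥ :=
      le_bot_iff.mp (le_trans (inf_le_inf inf_le_left inf_le_left) (le_of_eq hab))
    have hN1 : |μ (a ⊓ cᶜ)| + |μ (b ⊓ cᶜ)| ≤ N := hpairN _ _ hIa hIb hdis1
    have hdisjE : R.e (a ⊓ c) ∩ R.e (b ⊓ c) = ∅ := by
      rw [← R.map_inf]
      have h : (a ⊓ c) ⊓ (b ⊓ c) = ⊥ :=
        le_bot_iff.mp (le_trans (inf_le_inf inf_le_left inf_le_left) (le_of_eq hab))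
      rw [h, R.map_bot]
    have hc2 : |μ (a ⊓ c)| + |μ (b ⊓ c)| ≤ |x| + 2 * t := by
      rw [← hext (a ⊓ c), ← hext (b ⊓ c)]
      have hta := htvmono (c := c) (d := a ⊓ c) inf_le_right
      have htb := htvmono (c := c) (d := b ⊓ c) inf_le_right
      have hx0 : (0 : ℝ) ≤ |x| := abs_nonneg x
      by_cases hpa : p ∈ R.e (a ⊓ c)
      · have hpb : p ∉ R.e (b ⊓ c) := by
          intro hb'
          have : p ∈ R.e (a ⊓ c) ∩ R.e (b ⊓ c) := ⟨hpa, hb'⟩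
          rw [hdisjE] at this; exact this
        have h1 := hbound_mem (hmeas (a ⊓ c)) hpa
        have h2 := hbound_notmem (hmeas (b ⊓ c)) hpb
        linarith
      · by_cases hpb : p ∈ R.e (b ⊓ c)
        · have h1 := hbound_notmem (hmeas (a ⊓ c)) hpa
          have h2 := hbound_mem (hmeas (b ⊓ c)) hpb
          linarith
        · have h1 := hbound_notmem (hmeas (a ⊓ c)) hpa
          have h2 := hbound_notmem (hmeas (b ⊓ c)) hpb
          linarith
    have habs_a : |μ a| ≤ |μ (a ⊓ cᶜ)| + |μ (a ⊓ c)| := by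
      rw [hsplita a]; exact abs_add_le _ _
    have habs_b : |μ b| ≤ |μ (b ⊓ cᶜ)| + |μ (b ⊓ c)| := by
      rw [hsplita b]; exact abs_add_le _ _
    linarith
  -- Lower bound : N + |x| ≤ B
  have hlower : N + |x| ≤ B := by
    have key : ∀ a b : α, a ∈ I → b ∈ I → a ⊓ b = ⊥ → |μ a| + |μ b| ≤ B - |x| := by
      intro a b ha hb hab
      refine le_of_forall_pos_le_add fun ε hε => ?_
      obtain ⟨c, hcI, hpc, ht⟩ := approx ε hε
      set c' := c ⊓ aᶜ ⊓ bᶜ with hc'def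
      have hc'le : c' ≤ c := le_trans inf_le_left inf_le_left
      have hc'c : c'ᶜ ∈ I := by
        have h : c'ᶜ = cᶜ ⊔ a ⊔ b := by
          rw [hc'def, compl_inf, compl_inf, compl_compl, compl_compl]
        rw [h]; exact I.sup_mem (I.sup_mem hcI ha) hb
      have hpc' : p ∈ R.e c' := (hp c').mpr hc'c
      set y := μ c' with hydef
      have hyx : |y - x| < ε := by
        have hsplit : μhat (R.e c') = x + μhat (R.e c' \ {p}) := by
          rw [hxdef, ← VectorMeasure.of_union Set.disjoint_sdiff_right hpm
            ((hmeas c').diff hpm),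
            Set.union_diff_cancel (Set.singleton_subset_iff.mpr hpc')]
        have h1 : |y - x| ≤ (μhat.totalVariation (R.e c' \ {p})).toReal := by
          rw [hydef, ← hext c', hsplit]
          simpa using abs_le_tv19 μhat ((hmeas c').diff hpm)
        exact lt_of_le_of_lt (h1.trans (htvmono hc'le)) ht
      have hxy : |x| ≤ |y| + ε := by
        have := abs_sub_abs_le_abs_sub x y
        rw [abs_sub_comm] at this
        linarith
      have hac' : a ⊓ c' = ⊥ := by
        have h1 : c' ≤ aᶜ := le_trans inf_le_left inf_le_right
        exact le_bot_iff.mp (le_trans (inf_le_inf le_rfl h1) (by simp))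
      have hbc' : b ⊓ c' = ⊥ := by
        have h1 : c' ≤ bᶜ := inf_le_right
        exact le_bot_iff.mp (le_trans (inf_le_inf le_rfl h1) (by simp))
      have hmerge : |μ a| + |μ b| + |y| ≤ B := by
        rcases same_sign19 (μ a) (μ b) y with hs | hs | hs
        · have hd : (a ⊔ c') ⊓ b = ⊥ := by
            rw [inf_sup_right, hab, inf_comm c' b, hbc', sup_idem]
          have h1 := hpairB (a ⊔ c') b hd
          rw [hadd a c' hac', abs_add_of_mul_nonneg19 hs] at h1
          linarith
        · have hd : a ⊓ (b ⊔ c') = ⊥ := by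
            rw [inf_sup_left, hab, hac', sup_idem]
          have h1 := hpairB a (b ⊔ c') hd
          rw [hadd b c' hbc', abs_add_of_mul_nonneg19 hs] at h1
          linarith
        · have hd : (a ⊔ b) ⊓ c' = ⊥ := by
            rw [inf_sup_right, hac', hbc', sup_idem]
          have h1 := hpairB (a ⊔ b) c' hd
          rw [hadd a b hab, abs_add_of_mul_nonneg19 hs] at h1
          linarith
      linarith
    have h1 : N ≤ B - |x| := hNge _ key
    linarith
  have hBN : B = N + |x| := le_antisymm hupper hlower
  have e1 : bvar μ ⊤ = ENNReal.ofReal B := (ENNReal.ofReal_toReal hbdd).symm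
  have e2 : svar μ (I : Set α) = ENNReal.ofReal N := (ENNReal.ofReal_toReal hNfin).symm
  rw [e1, e2, hBN, ENNReal.ofReal_add ENNReal.toReal_nonneg (abs_nonneg x)]
end
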